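/- arXiv:1406.7078 — 2 statements merged into one kernel-verified Lean document; each statement's English description precedes it below -/
import Mathlib

section
/- Let x ≥ 2, let q be an integer with 2 ≤ q ≤ x, assume φ*ₓ(q) > 0 and π(x) > 0, and let X be the probability distribution on the primes p ≤ x given by Pr[X = p] = 1/(φ*ₓ(q)·π(x;q,p mod q)) when gcd(p,q) = 1 (and Pr[X = p] = 0 when p | q). Then the statistical distance to uniform satisfies the exact identity Δ₁(X) = (1/π(x))·Σ_{a∈(ℤ/qℤ)^*, π(x;q,a)≠0} |π(x;q,a) − π(x)/φ*ₓ(q)| + ω(q)/π(x). -/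
/-- The finite set of primes `p ≤ x`. -/
def primesUpTo (x : ℕ) : Finset ℕ := (Finset.range (x + 1)).filter Nat.Prime

/-- `π(x)`, the number of primes `≤ x`. -/
def primePi (x : ℕ) : ℕ := (primesUpTo x).card

/-- `π(x;q,a)`, the number of primes `p ≤ x` with `p ≡ a (mod q)`. -/
def primePiMod (x q a : ℕ) : ℕ :=
  ((primesUpTo x).filter (fun p => p % q = a % q)).card

/-- Canonical representatives of the invertible classes `(ℤ/qℤ)^*`. -/
def residues (q : ℕ) : Finset ℕ := (Finset.range q).filter (fun a => Nat.Coprime a q)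

/-- `φ*ₓ(q) = #{a ∈ (ℤ/qℤ)^* : π(x;q,a) ≠ 0}`. -/
def phiStar (x q : ℕ) : ℕ := ((residues q).filter (fun a => primePiMod x q a ≠ 0)).card

lemma coprime_mod_iff (p q : ℕ) : Nat.Coprime (p % q) q ↔ Nat.Coprime p q := by
  unfold Nat.Coprime
  rw [← Nat.gcd_rec, Nat.gcd_comm]

lemma abs_key (n f π : ℝ) (hn : 0 < n) (hf : 0 < f) (hπ : 0 < π) :
    n * |1 / (f * n) - 1 / π| = (1 / π) * |n - π / f| := by
  have h1 : n * (1 / (f * n) - 1 / π) = -((1 / π) * (n - π / f)) := by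
    field_simp
    ring
  calc n * |1 / (f * n) - 1 / π| = |n * (1 / (f * n) - 1 / π)| := by
        rw [abs_mul, abs_of_pos hn]
    _ = |(1 / π) * (n - π / f)| := by rw [h1, abs_neg]
    _ = (1 / π) * |n - π / f| := by
        rw [abs_mul, abs_of_pos (by positivity : (0:ℝ) < 1 / π)]

/-- Let `x ≥ 2`, `2 ≤ q ≤ x`, `φ*ₓ(q) > 0`, `π(x) > 0`, and let `X` be
the distribution on primes `p ≤ x` with `Pr[X = p] = 1/(φ*ₓ(q)·π(x;q,p mod q))` when
`gcd(p,q) = 1` and `Pr[X = p] = 0` when `p ∣ q`. Then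
`Δ₁(X) = (1/π(x))·∑_{a∈(ℤ/qℤ)^*, π(x;q,a)≠0} |π(x;q,a) − π(x)/φ*ₓ(q)| + ω(q)/π(x)`. -/
theorem statDist_eq_phiStar (x q : ℕ) (hx : 2 ≤ x) (hq : 2 ≤ q) (hqx : q ≤ x)
    (hφ : 0 < phiStar x q) (hπ : 0 < primePi x)
    (X : ℕ → ℝ)
    (hX : ∀ p ∈ primesUpTo x,
      X p = if Nat.Coprime p q
        then 1 / ((phiStar x q : ℝ) * (primePiMod x q (p % q) : ℝ)) else 0) :
    ∑ p ∈ primesUpTo x, |X p - 1 / (primePi x : ℝ)|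
      = (1 / (primePi x : ℝ)) *
          ∑ a ∈ (residues q).filter (fun a => primePiMod x q a ≠ 0),
            |(primePiMod x q a : ℝ) - (primePi x : ℝ) / (phiStar x q : ℝ)|
        + (q.primeFactors.card : ℝ) / (primePi x : ℝ) := by
  have hq0 : 0 < q := by omega
  have hπ' : (0:ℝ) < primePi x := by exact_mod_cast hπ
  have hφ' : (0:ℝ) < phiStar x q := by exact_mod_cast hφ
  rw [← Finset.sum_filter_add_sum_filter_not (primesUpTo x) (fun p => Nat.Coprime p q)]
  -- Non-coprime part: primes dividing q
  have hA : (primesUpTo x).filter (fun p => ¬ Nat.Coprime p q) = q.primeFactors := by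
    ext p
    simp only [primesUpTo, Finset.mem_filter, Finset.mem_range, Nat.lt_succ_iff,
      Nat.mem_primeFactors]
    constructor
    · rintro ⟨⟨hpx, hp⟩, hnc⟩
      refine ⟨hp, ?_, by omega⟩
      by_contra hdvd
      exact hnc ((Nat.Prime.coprime_iff_not_dvd hp).mpr hdvd)
    · rintro ⟨hp, hdvd, -⟩
      have hple : p ≤ q := Nat.le_of_dvd hq0 hdvd
      exact ⟨⟨by omega, hp⟩, fun hc => (Nat.Prime.coprime_iff_not_dvd hp).mp hc hdvd⟩
  have hApart : ∑ p ∈ (primesUpTo x).filter (fun p => ¬ Nat.Coprime p q),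
      |X p - 1 / (primePi x : ℝ)| = (q.primeFactors.card : ℝ) / (primePi x : ℝ) := by
    rw [hA]
    have hconst : ∀ p ∈ q.primeFactors, |X p - 1 / (primePi x : ℝ)| = 1 / (primePi x : ℝ) := by
      intro p hp
      rw [Nat.mem_primeFactors] at hp
      obtain ⟨hpp, hdvd, -⟩ := hp
      have hmem : p ∈ primesUpTo x := by
        simp only [primesUpTo, Finset.mem_filter, Finset.mem_range, Nat.lt_succ_iff]
        exact ⟨le_trans (Nat.le_of_dvd hq0 hdvd) hqx, hpp⟩
      rw [hX p hmem, if_neg (fun hc => (hpp.coprime_iff_not_dvd).mp hc hdvd),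
        zero_sub, abs_neg, abs_of_pos (by positivity : (0:ℝ) < 1 / (primePi x : ℝ))]
    rw [Finset.sum_congr rfl hconst, Finset.sum_const, nsmul_eq_mul]
    ring
  -- Coprime part
  have hBpart : ∑ p ∈ (primesUpTo x).filter (fun p => Nat.Coprime p q),
      |X p - 1 / (primePi x : ℝ)|
      = (1 / (primePi x : ℝ)) *
          ∑ a ∈ (residues q).filter (fun a => primePiMod x q a ≠ 0),
            |(primePiMod x q a : ℝ) - (primePi x : ℝ) / (phiStar x q : ℝ)| := by
    set T := (primesUpTo x).filter (fun p => Nat.Coprime p q) with hT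
    have hmaps : ∀ p ∈ T, p % q ∈ residues q := by
      intro p hp
      rw [hT, Finset.mem_filter] at hp
      simp only [residues, Finset.mem_filter, Finset.mem_range]
      exact ⟨Nat.mod_lt p hq0, (coprime_mod_iff p q).mpr hp.2⟩
    rw [← Finset.sum_fiberwise_of_maps_to hmaps (fun p => |X p - 1 / (primePi x : ℝ)|)]
    have hfib : ∀ a ∈ residues q,
        ∑ p ∈ T.filter (fun p => p % q = a), |X p - 1 / (primePi x : ℝ)|
        = (primePiMod x q a : ℝ) *
            |1 / ((phiStar x q : ℝ) * (primePiMod x q a : ℝ)) - 1 / (primePi x : ℝ)| := by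
      intro a ha
      simp only [residues, Finset.mem_filter, Finset.mem_range] at ha
      have haq : a % q = a := Nat.mod_eq_of_lt ha.1
      have hset : T.filter (fun p => p % q = a)
          = (primesUpTo x).filter (fun p => p % q = a % q) := by
        rw [hT, Finset.filter_filter]
        apply Finset.filter_congr
        intro p hp
        simp only [haq]
        constructor
        · rintro ⟨-, h⟩; exact h
        · intro h
          refine ⟨?_, h⟩
          rw [← coprime_mod_iff p q, h]
          exact ha.2
      have hconst : ∀ p ∈ T.filter (fun p => p % q = a),
          |X p - 1 / (primePi x : ℝ)|
          = |1 / ((phiStar x q : ℝ) * (primePiMod x q a : ℝ)) - 1 / (primePi x : ℝ)| := by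
        intro p hp
        rw [Finset.mem_filter, hT, Finset.mem_filter] at hp
        obtain ⟨⟨hmem, hcop⟩, hmod⟩ := hp
        rw [hX p hmem, if_pos hcop, hmod]
      rw [Finset.sum_congr rfl hconst, Finset.sum_const, nsmul_eq_mul, hset]
      rfl
    rw [Finset.sum_congr rfl hfib]
    rw [← Finset.sum_filter_add_sum_filter_not (residues q) (fun a => primePiMod x q a ≠ 0)]
    have hz : ∑ a ∈ (residues q).filter (fun a => ¬ primePiMod x q a ≠ 0),
        (primePiMod x q a : ℝ) *
          |1 / ((phiStar x q : ℝ) * (primePiMod x q a : ℝ)) - 1 / (primePi x : ℝ)| = 0 := by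
      apply Finset.sum_eq_zero
      intro a ha
      rw [Finset.mem_filter] at ha
      have : primePiMod x q a = 0 := by tauto
      rw [this]
      simp
    rw [hz, add_zero, Finset.mul_sum]
    apply Finset.sum_congr rfl
    intro a ha
    rw [Finset.mem_filter] at ha
    have hn : (0:ℝ) < (primePiMod x q a : ℝ) := by
      have := Nat.pos_of_ne_zero ha.2
      exact_mod_cast this
    exact abs_key _ _ _ hn hφ' hπ'
  rw [hApart, hBpart]
end

section
/- Let x ≥ 2 and let Q be an even integer with 2 ≤ Q < x. Set F(Q) = Σ_{Q/2<q≤Q} φ(q) and F*ₓ(Q) = Σ_{Q/2<q≤Q} φ*ₓ(q), and assume F*ₓ(Q) > 0 and π(x) > 0. Let X be the probability distribution on the primes p ≤ x given by Pr[X = p] = (1/F*ₓ(Q))·Σ_{Q/2<q≤Q, p∤q} 1/π(x;q, p mod q) (note π(x;q,p mod q) ≥ 1 whenever p ∤ q, since p itself is counted; this defines a probability distribution). Then the statistical distance to uniform satisfies Δ₁(X) ≤ (1/(F*ₓ(Q)·π(x))) · ( Q·√(F(Q))·√(Σ_{Q/2<q≤Q} Σ_{a∈(ℤ/qℤ)^*}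 (π(x;q,a) − π(x)/φ(q))²) + (F(Q) − F*ₓ(Q))·π(x) + Σ_{Q/2<q≤Q} ω(q)·φ*ₓ(q) ). -/
open Finset

lemma coprime_mod (p q : ℕ) (hc : Nat.Coprime p q) : Nat.Coprime (p % q) q := by
  rw [Nat.Coprime, ← Nat.gcd_rec]; exact hc.symm

lemma card_residues (q : ℕ) : (residues q).card = q.totient := by
  rw [Nat.totient, residues]; congr 1
  apply Finset.filter_congr; intro a _; simp [Nat.coprime_comm]

lemma mem_residues_of (q p : ℕ) (hp : p.Prime) (hq : 2 ≤ q) (hnd : ¬ p ∣ q) :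
    p % q ∈ residues q := by
  have hc : Nat.Coprime p q := (Nat.coprime_or_dvd_of_prime hp q).resolve_right hnd
  simp only [residues, mem_filter, mem_range]
  exact ⟨Nat.mod_lt _ (by omega), coprime_mod p q hc⟩

lemma fiber_card (x q a : ℕ) (hq : 2 ≤ q) (ha : a ∈ residues q) :
    (((primesUpTo x).filter (fun p => ¬ p ∣ q)).filter (fun p => p % q = a)).card
      = primePiMod x q a := by
  simp only [residues, mem_filter, mem_range] at ha
  obtain ⟨haq, hac⟩ := ha
  rw [primePiMod, Finset.filter_filter]
  congr 1
  apply Finset.filter_congr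
  intro p hp
  simp only [primesUpTo, mem_filter] at hp
  have haa : a % q = a := Nat.mod_eq_of_lt haq
  rw [haa]
  constructor
  · exact fun h => h.2
  · intro h
    refine ⟨?_, h⟩
    intro hd
    have hple : p ≤ q := Nat.le_of_dvd (by omega) hd
    rcases lt_or_eq_of_le hple with hlt | heq
    · have hpm : p % q = p := Nat.mod_eq_of_lt hlt
      rw [hpm] at h
      subst h
      exact ((Nat.Prime.coprime_iff_not_dvd hp.2).mp hac) hd
    · subst heq
      rw [Nat.mod_self] at h
      rw [← h] at hac
      have h1 := Nat.coprime_zero_left _ |>.mp hac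
      omega

lemma sum_group (x q : ℕ) (hq : 2 ≤ q) (f : ℕ → ℝ) :
    ∑ p ∈ (primesUpTo x).filter (fun p => ¬ p ∣ q), f (p % q)
      = ∑ a ∈ residues q, (primePiMod x q a : ℝ) * f a := by
  rw [← Finset.sum_fiberwise_of_maps_to (t := residues q) (g := fun p => p % q)
    (fun p hp => by
      simp only [primesUpTo, mem_filter] at hp
      exact mem_residues_of q p hp.1.2 hq hp.2) (fun p => f (p % q))]
  refine Finset.sum_congr rfl fun a ha => ?_
  have hcong : ∀ p ∈ ((primesUpTo x).filter (fun p => ¬ p ∣ q)).filter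
      (fun p => p % q = a), f (p % q) = f a := by
    intro p hp
    simp only [mem_filter] at hp
    rw [hp.2]
  rw [Finset.sum_congr rfl hcong, Finset.sum_const, nsmul_eq_mul,
    ← fiber_card x q a hq ha]

lemma sum_primePiMod_le (x q : ℕ) (hq : 2 ≤ q) :
    (∑ a ∈ residues q, (primePiMod x q a : ℝ)) ≤ (primePi x : ℝ) := by
  have h := sum_group x q hq (fun _ => (1 : ℝ))
  simp only [mul_one] at h
  rw [← h, Finset.sum_const, nsmul_eq_mul, mul_one]
  exact Nat.cast_le.mpr (Finset.card_le_card (Finset.filter_subset _ _))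

lemma card_dvd_le (x q : ℕ) (hq : 2 ≤ q) :
    ((primesUpTo x).filter (fun p => p ∣ q)).card ≤ q.primeFactors.card := by
  apply Finset.card_le_card
  intro p hp
  simp only [primesUpTo, mem_filter] at hp
  exact Nat.mem_primeFactors.mpr ⟨hp.1.2, hp.2, by omega⟩

lemma phiStar_le_totient (x q : ℕ) : phiStar x q ≤ q.totient := by
  rw [← card_residues]
  exact Finset.card_le_card (Finset.filter_subset _ _)

lemma abs_sum_le_sqrt {α : Type*} (s : Finset α) (v : α → ℝ) :
    ∑ a ∈ s, |v a| ≤ Real.sqrt s.card * Real.sqrt (∑ a ∈ s, (v a) ^ 2) := by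
  rw [← Real.sqrt_mul (by positivity)]
  rw [Real.le_sqrt (Finset.sum_nonneg fun a _ => abs_nonneg _) (by positivity)]
  calc (∑ a ∈ s, |v a|) ^ 2 = (∑ a ∈ s, 1 * |v a|) ^ 2 := by simp
    _ ≤ (∑ a ∈ s, 1 ^ 2) * ∑ a ∈ s, |v a| ^ 2 := Finset.sum_mul_sq_le_sq_mul_sq ..
    _ = s.card * ∑ a ∈ s, (v a) ^ 2 := by simp [sq_abs]

lemma cs_sqrt {α : Type*} (s : Finset α) (u w : α → ℝ) (hu : ∀ a ∈ s, 0 ≤ u a)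
    (hw : ∀ a ∈ s, 0 ≤ w a) :
    ∑ a ∈ s, Real.sqrt (u a) * Real.sqrt (w a)
      ≤ Real.sqrt (∑ a ∈ s, u a) * Real.sqrt (∑ a ∈ s, w a) := by
  rw [← Real.sqrt_mul (Finset.sum_nonneg hu)]
  rw [Real.le_sqrt (Finset.sum_nonneg fun a _ => by positivity)
    (mul_nonneg (Finset.sum_nonneg hu) (Finset.sum_nonneg hw))]
  calc (∑ a ∈ s, Real.sqrt (u a) * Real.sqrt (w a)) ^ 2
      ≤ (∑ a ∈ s, Real.sqrt (u a) ^ 2) * ∑ a ∈ s, Real.sqrt (w a) ^ 2 :=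
        Finset.sum_mul_sq_le_sq_mul_sq ..
    _ = (∑ a ∈ s, u a) * ∑ a ∈ s, w a := by
        rw [Finset.sum_congr rfl (fun a ha => Real.sq_sqrt (hu a ha)),
          Finset.sum_congr rfl (fun a ha => Real.sq_sqrt (hw a ha))]

lemma per_q (x q : ℕ) (hq : 2 ≤ q) (hπ : 0 < primePi x) :
    ∑ p ∈ primesUpTo x,
      |(if ¬ p ∣ q then 1 / (primePiMod x q (p % q) : ℝ) else 0)
        - (phiStar x q : ℝ) / (primePi x : ℝ)|
    ≤ (q.primeFactors.card : ℝ) * (phiStar x q : ℝ) / (primePi x : ℝ)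
      + (q.totient : ℝ) / (primePi x : ℝ) *
          (Real.sqrt (q.totient : ℝ) * Real.sqrt (∑ a ∈ residues q,
            ((primePiMod x q a : ℝ) - (primePi x : ℝ) / (q.totient : ℝ)) ^ 2))
      + ((q.totient : ℝ) - (phiStar x q : ℝ)) := by
  have hN : (0 : ℝ) < (primePi x : ℝ) := by exact_mod_cast hπ
  have hφ : (0 : ℝ) < (q.totient : ℝ) := by
    have : 0 < q.totient := Nat.totient_pos.mpr (by omega)
    exact_mod_cast this
  have hφs : (phiStar x q : ℝ) ≤ (q.totient : ℝ) := by
    exact_mod_cast phiStar_le_totient x q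
  set N : ℝ := (primePi x : ℝ) with hNdef
  set φ : ℝ := (q.totient : ℝ) with hφdef
  set φs : ℝ := (phiStar x q : ℝ) with hφsdef
  have hφs0 : 0 ≤ φs := by positivity
  rw [← Finset.sum_filter_add_sum_filter_not (primesUpTo x) (fun p => p ∣ q)]
  have h1 : ∑ p ∈ (primesUpTo x).filter (fun p => p ∣ q),
      |(if ¬ p ∣ q then 1 / (primePiMod x q (p % q) : ℝ) else 0) - φs / N|
      ≤ (q.primeFactors.card : ℝ) * φs / N := by
    have heq : ∀ p ∈ (primesUpTo x).filter (fun p => p ∣ q),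
        |(if ¬ p ∣ q then 1 / (primePiMod x q (p % q) : ℝ) else 0) - φs / N|
        = φs / N := by
      intro p hp
      simp only [mem_filter] at hp
      rw [if_neg (by simpa using hp.2), zero_sub, abs_neg, abs_of_nonneg (by positivity)]
    rw [Finset.sum_congr rfl heq, Finset.sum_const, nsmul_eq_mul, mul_div_assoc]
    apply mul_le_mul_of_nonneg_right _ (by positivity)
    exact_mod_cast card_dvd_le x q hq
  have h2 : ∑ p ∈ (primesUpTo x).filter (fun p => ¬ p ∣ q),
      |(if ¬ p ∣ q then 1 / (primePiMod x q (p % q) : ℝ) else 0) - φs / N|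
      ≤ φ / N * (Real.sqrt φ * Real.sqrt (∑ a ∈ residues q,
            ((primePiMod x q a : ℝ) - N / φ) ^ 2)) + (φ - φs) := by
    have heq : ∀ p ∈ (primesUpTo x).filter (fun p => ¬ p ∣ q),
        |(if ¬ p ∣ q then 1 / (primePiMod x q (p % q) : ℝ) else 0) - φs / N|
        = |1 / (primePiMod x q (p % q) : ℝ) - φs / N| := by
      intro p hp
      simp only [mem_filter] at hp
      rw [if_pos (by simpa using hp.2)]
    rw [Finset.sum_congr rfl heq,
      sum_group x q hq (fun a => |1 / (primePiMod x q a : ℝ) - φs / N|)]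
    have hpt : ∀ a ∈ residues q,
        (primePiMod x q a : ℝ) * |1 / (primePiMod x q a : ℝ) - φs / N|
        ≤ φ / N * |(primePiMod x q a : ℝ) - N / φ|
          + (primePiMod x q a : ℝ) / N * (φ - φs) := by
      intro a _
      rcases Nat.eq_zero_or_pos (primePiMod x q a) with h0 | hpos
      · rw [h0]
        push_cast
        rw [zero_mul]
        apply add_nonneg
        · positivity
        · apply mul_nonneg (by positivity) (by linarith)
      · set m : ℝ := (primePiMod x q a : ℝ) with hm
        have hm1 : (1 : ℝ) ≤ m := by
          rw [hm]; exact_mod_cast hpos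
        have hm0 : (0 : ℝ) < m := by linarith
        have e0 : m * (1 / m - φs / N) = 1 - m * φs / N := by
          field_simp
        have e1 : m * |1 / m - φs / N| = |1 - m * φs / N| := by
          rw [← e0, abs_mul, abs_of_pos hm0]
        rw [e1]
        have key : 1 - m * φs / N = φ / N * (N / φ - m) + m / N * (φ - φs) := by
          field_simp
          ring
        rw [key]
        refine (abs_add_le _ _).trans (le_of_eq ?_)
        rw [abs_mul, abs_mul, abs_of_nonneg (le_of_lt (by positivity : (0:ℝ) < φ / N)),
          abs_of_nonneg (by positivity : (0:ℝ) ≤ m / N),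
          abs_of_nonneg (by linarith : (0:ℝ) ≤ φ - φs), abs_sub_comm]
    refine (Finset.sum_le_sum hpt).trans ?_
    rw [Finset.sum_add_distrib, ← Finset.mul_sum, ← Finset.sum_mul, ← Finset.sum_div]
    have hA : φ / N * ∑ a ∈ residues q, |(primePiMod x q a : ℝ) - N / φ|
        ≤ φ / N * (Real.sqrt φ * Real.sqrt (∑ a ∈ residues q,
            ((primePiMod x q a : ℝ) - N / φ) ^ 2)) := by
      apply mul_le_mul_of_nonneg_left _ (by positivity)
      have := abs_sum_le_sqrt (residues q) (fun a => (primePiMod x q a : ℝ) - N / φ)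
      rwa [card_residues] at this
    have hB : (∑ a ∈ residues q, (primePiMod x q a : ℝ)) / N * (φ - φs) ≤ φ - φs := by
      have hle : (∑ a ∈ residues q, (primePiMod x q a : ℝ)) / N ≤ 1 := by
        rw [div_le_one hN]
        exact sum_primePiMod_le x q hq
      nlinarith [Finset.sum_nonneg (fun a (_ : a ∈ residues q) =>
        (Nat.cast_nonneg (primePiMod x q a) : (0:ℝ) ≤ _))]
    linarith
  linarith

/-- Let `x ≥ 2` and `Q` even with `2 ≤ Q < x`. Set
`F(Q) = ∑_{Q/2<q≤Q} φ(q)` and `F*ₓ(Q) = ∑_{Q/2<q≤Q} φ*ₓ(q)`, and assume `F*ₓ(Q) > 0`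
and `π(x) > 0`. Let `X` be the distribution on primes `p ≤ x` given by
`Pr[X = p] = (1/F*ₓ(Q))·∑_{Q/2<q≤Q, p∤q} 1/π(x;q,p mod q)`. Then
`Δ₁(X) ≤ (1/(F*ₓ(Q)·π(x))) · ( Q·√(F(Q))·√(∑_{Q/2<q≤Q} ∑_{a∈(ℤ/qℤ)^*}
(π(x;q,a) − π(x)/φ(q))²) + (F(Q) − F*ₓ(Q))·π(x) + ∑_{Q/2<q≤Q} ω(q)·φ*ₓ(q) )`. -/
theorem statDist_le_uncond (x Q : ℕ) (hx : 2 ≤ x) (hQ : 2 ≤ Q) (hQe : Even Q)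
    (hQx : Q < x)
    (hF : 0 < ∑ q ∈ Finset.Ioc (Q / 2) Q, phiStar x q) (hπ : 0 < primePi x)
    (X : ℕ → ℝ)
    (hX : ∀ p ∈ primesUpTo x,
      X p = (1 / ((∑ q ∈ Finset.Ioc (Q / 2) Q, phiStar x q : ℕ) : ℝ)) *
        ∑ q ∈ (Finset.Ioc (Q / 2) Q).filter (fun q => ¬ p ∣ q),
          1 / (primePiMod x q (p % q) : ℝ)) :
    ∑ p ∈ primesUpTo x, |X p - 1 / (primePi x : ℝ)|
      ≤ (1 / (((∑ q ∈ Finset.Ioc (Q / 2) Q, phiStar x q : ℕ) : ℝ) * (primePi x : ℝ))) *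
          ((Q : ℝ) * Real.sqrt ((∑ q ∈ Finset.Ioc (Q / 2) Q, q.totient : ℕ) : ℝ) *
              Real.sqrt (∑ q ∈ Finset.Ioc (Q / 2) Q, ∑ a ∈ residues q,
                ((primePiMod x q a : ℝ) - (primePi x : ℝ) / (q.totient : ℝ)) ^ 2)
            + (((∑ q ∈ Finset.Ioc (Q / 2) Q, q.totient : ℕ) : ℝ)
                - ((∑ q ∈ Finset.Ioc (Q / 2) Q, phiStar x q : ℕ) : ℝ)) * (primePi x : ℝ)
            + ((∑ q ∈ Finset.Ioc (Q / 2) Q, q.primeFactors.card * phiStar x q : ℕ) : ℝ)) := by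
  classical
  have hN : (0:ℝ) < (primePi x : ℝ) := by exact_mod_cast hπ
  have hFs : (0:ℝ) < ((∑ q ∈ Finset.Ioc (Q / 2) Q, phiStar x q : ℕ) : ℝ) := by
    exact_mod_cast hF
  have hqS : ∀ q ∈ Finset.Ioc (Q / 2) Q, 2 ≤ q := by
    intro q hq; rw [Finset.mem_Ioc] at hq
    have : 1 ≤ Q / 2 := by omega
    omega
  -- abbreviations as local notation via generalized expressions
  set S := Finset.Ioc (Q / 2) Q with hSdef
  set N := (primePi x : ℝ) with hNdef
  set Fs := ((∑ q ∈ S, phiStar x q : ℕ) : ℝ) with hFsdef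
  set g : ℕ → ℕ → ℝ := fun p q =>
    (if ¬ p ∣ q then 1 / (primePiMod x q (p % q) : ℝ) else 0) - (phiStar x q : ℝ) / N
    with hgdef
  have step1 : ∀ p ∈ primesUpTo x, X p - 1 / N = (1 / Fs) * ∑ q ∈ S, g p q := by
    intro p hp
    rw [hX p hp]
    have hsum : ∑ q ∈ S, (phiStar x q : ℝ) / N = Fs / N := by
      rw [← Finset.sum_div, hFsdef]
      push_cast
      rfl
    simp only [hgdef]
    rw [Finset.sum_sub_distrib, hsum, ← Finset.sum_filter, mul_sub]
    congr 1
    field_simp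
  have Eq_nonneg : ∀ q ∈ S, (0:ℝ) ≤ ∑ a ∈ residues q,
      ((primePiMod x q a : ℝ) - N / (q.totient : ℝ)) ^ 2 := by
    intro q _; positivity
  calc ∑ p ∈ primesUpTo x, |X p - 1 / N|
      = ∑ p ∈ primesUpTo x, |(1 / Fs) * ∑ q ∈ S, g p q| :=
        Finset.sum_congr rfl fun p hp => by rw [step1 p hp]
    _ = (1 / Fs) * ∑ p ∈ primesUpTo x, |∑ q ∈ S, g p q| := by
        rw [Finset.mul_sum]
        exact Finset.sum_congr rfl fun p _ => by
          rw [abs_mul, abs_of_pos (by positivity : (0:ℝ) < 1 / Fs)]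
    _ ≤ (1 / Fs) * ∑ p ∈ primesUpTo x, ∑ q ∈ S, |g p q| := by
        apply mul_le_mul_of_nonneg_left _ (by positivity)
        exact Finset.sum_le_sum fun p _ => Finset.abs_sum_le_sum_abs _ _
    _ = (1 / Fs) * ∑ q ∈ S, ∑ p ∈ primesUpTo x, |g p q| := by rw [Finset.sum_comm]
    _ ≤ (1 / Fs) * ∑ q ∈ S,
          ((q.primeFactors.card : ℝ) * (phiStar x q : ℝ) / N
            + (q.totient : ℝ) / N * (Real.sqrt (q.totient : ℝ)
                * Real.sqrt (∑ a ∈ residues q,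
                    ((primePiMod x q a : ℝ) - N / (q.totient : ℝ)) ^ 2))
            + ((q.totient : ℝ) - (phiStar x q : ℝ))) := by
        apply mul_le_mul_of_nonneg_left _ (by positivity)
        exact Finset.sum_le_sum fun q hq => per_q x q (hqS q hq) hπ
    _ ≤ (1 / Fs) *
          ((((∑ q ∈ S, q.primeFactors.card * phiStar x q : ℕ) : ℝ)) / N
            + (Q : ℝ) * Real.sqrt (((∑ q ∈ S, q.totient : ℕ) : ℝ))
                * Real.sqrt (∑ q ∈ S, ∑ a ∈ residues q,
                    ((primePiMod x q a : ℝ) - N / (q.totient : ℝ)) ^ 2) / N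
            + (((∑ q ∈ S, q.totient : ℕ) : ℝ) - Fs)) := by
        apply mul_le_mul_of_nonneg_left _ (by positivity)
        rw [Finset.sum_add_distrib, Finset.sum_add_distrib]
        have hA : ∑ q ∈ S, (q.primeFactors.card : ℝ) * (phiStar x q : ℝ) / N
            = (((∑ q ∈ S, q.primeFactors.card * phiStar x q : ℕ) : ℝ)) / N := by
          rw [← Finset.sum_div]; push_cast; rfl
        have hC : ∑ q ∈ S, ((q.totient : ℝ) - (phiStar x q : ℝ))
            = (((∑ q ∈ S, q.totient : ℕ) : ℝ) - Fs) := by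
          rw [Finset.sum_sub_distrib, hFsdef]; push_cast; rfl
        rw [hA, hC]
        have hB : ∑ q ∈ S, (q.totient : ℝ) / N * (Real.sqrt (q.totient : ℝ)
                * Real.sqrt (∑ a ∈ residues q,
                    ((primePiMod x q a : ℝ) - N / (q.totient : ℝ)) ^ 2))
            ≤ (Q : ℝ) * Real.sqrt (((∑ q ∈ S, q.totient : ℕ) : ℝ))
                * Real.sqrt (∑ q ∈ S, ∑ a ∈ residues q,
                    ((primePiMod x q a : ℝ) - N / (q.totient : ℝ)) ^ 2) / N := by
          have h1 : ∀ q ∈ S, (q.totient : ℝ) / N * (Real.sqrt (q.totient : ℝ)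
                * Real.sqrt (∑ a ∈ residues q,
                    ((primePiMod x q a : ℝ) - N / (q.totient : ℝ)) ^ 2))
              ≤ (Q : ℝ) / N * (Real.sqrt (q.totient : ℝ)
                * Real.sqrt (∑ a ∈ residues q,
                    ((primePiMod x q a : ℝ) - N / (q.totient : ℝ)) ^ 2)) := by
            intro q hq
            apply mul_le_mul_of_nonneg_right _ (by positivity)
            have hle : (q.totient : ℝ) ≤ (Q : ℝ) := by
              have h4 : q.totient ≤ Q :=
                le_trans (Nat.totient_le q) (Finset.mem_Ioc.mp hq).2
              exact_mod_cast h4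
            exact (div_le_div_iff_of_pos_right hN).mpr hle
          refine (Finset.sum_le_sum h1).trans ?_
          rw [← Finset.mul_sum]
          have h2 := cs_sqrt S (fun q => (q.totient : ℝ))
            (fun q => ∑ a ∈ residues q,
              ((primePiMod x q a : ℝ) - N / (q.totient : ℝ)) ^ 2)
            (fun q _ => by positivity) Eq_nonneg
          have h3 : Real.sqrt (∑ q ∈ S, (q.totient : ℝ))
              = Real.sqrt (((∑ q ∈ S, q.totient : ℕ) : ℝ)) := by
            congr 1; push_cast; rfl
          rw [h3] at h2
          calc (Q : ℝ) / N * ∑ q ∈ S, (Real.sqrt (q.totient : ℝ)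
                * Real.sqrt (∑ a ∈ residues q,
                    ((primePiMod x q a : ℝ) - N / (q.totient : ℝ)) ^ 2))
              ≤ (Q : ℝ) / N * (Real.sqrt (((∑ q ∈ S, q.totient : ℕ) : ℝ))
                * Real.sqrt (∑ q ∈ S, ∑ a ∈ residues q,
                    ((primePiMod x q a : ℝ) - N / (q.totient : ℝ)) ^ 2)) := by
                apply mul_le_mul_of_nonneg_left h2 (by positivity)
            _ = (Q : ℝ) * Real.sqrt (((∑ q ∈ S, q.totient : ℕ) : ℝ))
                * Real.sqrt (∑ q ∈ S, ∑ a ∈ residues q,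
                    ((primePiMod x q a : ℝ) - N / (q.totient : ℝ)) ^ 2) / N := by
                ring
        linarith
    _ = (1 / (Fs * N)) *
          ((Q : ℝ) * Real.sqrt (((∑ q ∈ S, q.totient : ℕ) : ℝ))
              * Real.sqrt (∑ q ∈ S, ∑ a ∈ residues q,
                  ((primePiMod x q a : ℝ) - N / (q.totient : ℝ)) ^ 2)
            + (((∑ q ∈ S, q.totient : ℕ) : ℝ) - Fs) * N
            + (((∑ q ∈ S, q.primeFactors.card * phiStar x q : ℕ) : ℝ))) := by
        field_simp
        ring
end
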